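/- Sufficient inexactness criterion for the Monteiro–Svaiter condition: let f : ℝⁿ → ℝ be convex and differentiable with L_f-Lipschitz gradient, let L > 0, x ∈ ℝⁿ, and let y⋆ = y_L(x) be the (unique) minimizer of F_{L,x} over ℝⁿ. If y ∈ ℝⁿ satisfies ‖y − y⋆‖₂ ≤ (L/(3L + 2L_f)) ‖x − y⋆‖₂, then ‖∇F_{L,x}(y)‖₂ ≤ (L/2) ‖y − x‖₂. -/

import Mathlib

open InnerProductSpace

/-- Sufficient inexactness criterion for the Monteiro–Svaiter condition. -/
theorem sufficient_inexactness_criterion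
    {n : ℕ} (f : EuclideanSpace ℝ (Fin n) → ℝ)
    (f' : EuclideanSpace ℝ (Fin n) → EuclideanSpace ℝ (Fin n))
    (hconv : ConvexOn ℝ Set.univ f)
    (hgrad : ∀ v, HasGradientAt f (f' v) v)
    (Lf : ℝ) (hLip : ∀ u v, ‖f' u - f' v‖ ≤ Lf * ‖u - v‖)
    (L : ℝ) (hL : 0 < L)
    (x ystar : EuclideanSpace ℝ (Fin n))
    (hystar : ∀ v, f ystar + L / 2 * ‖ystar - x‖ ^ 2 ≤ f v + L / 2 * ‖v - x‖ ^ 2)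
    (y : EuclideanSpace ℝ (Fin n))
    (hy : ‖y - ystar‖ ≤ L / (3 * L + 2 * Lf) * ‖x - ystar‖) :
    ‖f' y + L • (y - x)‖ ≤ L / 2 * ‖y - x‖ := by
  rcases Nat.eq_zero_or_pos n with hn | hn
  · -- trivial: the space is a subsingleton
    have : Subsingleton (EuclideanSpace ℝ (Fin n)) := by
      subst hn
      infer_instance
    have h1 : f' y + L • (y - x) = 0 := Subsingleton.elim _ _
    rw [h1, norm_zero]
    positivity
  · -- Lf ≥ 0
    have hLf : 0 ≤ Lf := by
      have h := hLip (EuclideanSpace.single (⟨0, hn⟩ : Fin n) (1:ℝ)) 0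
      have hnorm : ‖(EuclideanSpace.single (⟨0, hn⟩ : Fin n) (1:ℝ)) - 0‖ = 1 := by
        simp [EuclideanSpace.norm_single]
      rw [hnorm, mul_one] at h
      exact le_trans (norm_nonneg _) h
    -- the gradient of F at any v
    have hF : ∀ v : EuclideanSpace ℝ (Fin n), HasFDerivAt (fun w => f w + L / 2 * ‖w - x‖ ^ 2)
        (toDual ℝ (EuclideanSpace ℝ (Fin n)) (f' v + L • (v - x))) v := by
      intro v
      have h1 : HasFDerivAt f (toDual ℝ (EuclideanSpace ℝ (Fin n)) (f' v)) v := (hgrad v).hasFDerivAt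
      have h2 : HasFDerivAt (fun w : EuclideanSpace ℝ (Fin n) => w - x) (ContinuousLinearMap.id ℝ (EuclideanSpace ℝ (Fin n))) v :=
        (hasFDerivAt_id v).sub_const x
      have h3 := h2.inner ℝ h2
      have hs : HasFDerivAt (fun w : EuclideanSpace ℝ (Fin n) => ‖w - x‖ ^ 2) (toDual ℝ (EuclideanSpace ℝ (Fin n)) ((2:ℝ) • (v - x))) v := by
        have hfun : (fun w : EuclideanSpace ℝ (Fin n) => ‖w - x‖ ^ 2) = fun w => inner (𝕜 := ℝ) (w - x) (w - x) := by
          funext w; rw [real_inner_self_eq_norm_sq]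
        rw [hfun]
        refine HasFDerivAt.congr_fderiv h3 ?_
        ext w
        simp [real_inner_smul_left, two_smul, inner_add_left, inner_sub_left, inner_sub_right,
          real_inner_comm, mul_comm]
      have h4 := h1.add (hs.const_mul (L / 2))
      refine HasFDerivAt.congr_fderiv h4 ?_
      ext w
      simp [inner_add_left, real_inner_smul_left]
      ring
    -- first-order condition at ystar
    have hmin : IsLocalMin (fun w => f w + L / 2 * ‖w - x‖ ^ 2) ystar :=
      Filter.Eventually.of_forall hystar
    have hzero : f' ystar + L • (ystar - x) = 0 := by
      have := hmin.hasFDerivAt_eq_zero (hF ystar)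
      have h5 : toDual ℝ (EuclideanSpace ℝ (Fin n)) (f' ystar + L • (ystar - x)) = toDual ℝ (EuclideanSpace ℝ (Fin n)) 0 := by
        simpa using this
      exact (toDual ℝ (EuclideanSpace ℝ (Fin n))).injective h5
    -- rewrite the target gradient
    have hrw : f' y + L • (y - x) = (f' y - f' ystar) + L • (y - ystar) := by
      have h6 : f' ystar = -(L • (ystar - x)) := by
        rw [eq_neg_iff_add_eq_zero]; exact hzero
      rw [h6]
      module
    rw [hrw]
    have hbound : ‖(f' y - f' ystar) + L • (y - ystar)‖ ≤ (Lf + L) * ‖y - ystar‖ := by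
      calc ‖(f' y - f' ystar) + L • (y - ystar)‖
          ≤ ‖f' y - f' ystar‖ + ‖L • (y - ystar)‖ := norm_add_le _ _
        _ ≤ Lf * ‖y - ystar‖ + L * ‖y - ystar‖ := by
            gcongr
            · exact hLip y ystar
            · rw [norm_smul, Real.norm_eq_abs, abs_of_pos hL]
        _ = (Lf + L) * ‖y - ystar‖ := by ring
    have htri : ‖x - ystar‖ - ‖y - ystar‖ ≤ ‖y - x‖ := by
      have h8 : x - ystar = -(y - x) + (y - ystar) := by module
      have := norm_add_le (-(y - x)) (y - ystar)
      rw [← h8, norm_neg] at this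
      linarith
    have hdenom : 0 < 3 * L + 2 * Lf := by linarith
    have hyn : 0 ≤ ‖y - ystar‖ := norm_nonneg _
    have hxn : 0 ≤ ‖x - ystar‖ := norm_nonneg _
    have hy' : (3 * L + 2 * Lf) * ‖y - ystar‖ ≤ L * ‖x - ystar‖ := by
      have := hy
      rw [div_mul_eq_mul_div, le_div_iff₀ hdenom] at this
      linarith [this]
    nlinarith [htri, hbound, norm_nonneg (y - x)]
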